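/- Let ρ ≠ 0, c > 0, let α, β be real angles, assume E_c = (u² + v²)/2, M² = (u² + v²)/c², H = E_c + c²/γ₁, and assume the null-eigenvalue relation u·sin(α − β) − v·cos(α − β) + c = 0. Define λ = (1/ρ)·(c·(1 + (γ₁/2)·M²), sin(α − β) − γ₁·u/c, −cos(α − β) − γ₁·v/c, γ₁/c) ∈ ℝ⁴. Then the dot products (1, u, v, E_c)·λ = 0 and (E_c, H·u, H·v, H²)·λ = 0 both hold. (These orthogonality relations show that the two streamtrace ODEs are automatically satisfied by the adjoint field ψ = φ_{α−β}(x sin(α−β) − y cos(α−β))·λ of a constant supersonic flow region.) -/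

import Mathlib

open Matrix

/-- Orthogonality of the streamtrace-ODE coefficient vectors `(1, u, v, E_c)` and
`(E_c, Hu, Hv, H²)` with the left null eigenvector `λ₀^{α−β}` of the constant
supersonic-flow adjoint field. -/
theorem streamtrace_ode_orthogonal_to_left_eigenvector
    (γ γ₁ u v ρ c α β Ec M H : ℝ) (hγ : 1 < γ) (hγ₁ : γ₁ = γ - 1)
    (hρ : ρ ≠ 0) (hc : 0 < c)
    (hEc : Ec = (u ^ 2 + v ^ 2) / 2)
    (hM : M ^ 2 = (u ^ 2 + v ^ 2) / c ^ 2)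
    (hH : H = Ec + c ^ 2 / γ₁)
    (heig : u * Real.sin (α - β) - v * Real.cos (α - β) + c = 0)
    (lam : Fin 4 → ℝ)
    (hlam : lam = (1 / ρ) • ![c * (1 + γ₁ / 2 * M ^ 2),
                              Real.sin (α - β) - γ₁ * u / c,
                              -Real.cos (α - β) - γ₁ * v / c,
                              γ₁ / c]) :
    ![1, u, v, Ec] ⬝ᵥ lam = 0 ∧ ![Ec, H * u, H * v, H ^ 2] ⬝ᵥ lam = 0 := by
  have hγ0 : γ₁ ≠ 0 := by rw [hγ₁]; nlinarith
  have hc0 : c ≠ 0 := ne_of_gt hc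
  subst hlam hEc hH
  constructor
  · simp only [dotProduct, Fin.sum_univ_four, Pi.smul_apply,
      Matrix.cons_val_zero, Matrix.cons_val_one, Matrix.head_cons,
      Matrix.cons_val_two, Matrix.tail_cons, Matrix.cons_val_three,
      smul_eq_mul]
    rw [hM]
    field_simp
    linear_combination (2 * c) * heig
  · simp only [dotProduct, Fin.sum_univ_four, Pi.smul_apply,
      Matrix.cons_val_zero, Matrix.cons_val_one, Matrix.head_cons,
      Matrix.cons_val_two, Matrix.tail_cons, Matrix.cons_val_three,
      smul_eq_mul]
    rw [hM]
    field_simp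
    linear_combination (2 * γ₁ * c * (u ^ 2 + v ^ 2)
      + 4 * c ^ 3) * heig
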